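/- Fix reals a ≥ 0 and 0 ≤ α ≤ β, a real 0 < r ≤ 1 and a constant M > 0. Suppose f : [0,∞) → ℝ is continuous and satisfies |f(t) − f(x)| ≤ M·|t−x|^r/(t+x)^{r/2} for all t, x ∈ (0,∞). Then for every integer n ≥ 1 and every x > 0: |T_{n,a}^{α,β}(f;x) − f(x)| ≤ M·(Λ_n(x)/x)^{r/2}, where Λ_n(x) = T_{n,a}^{α,β}((t−x)²;x). -/

import Mathlib

open MeasureTheory Filter

/-- Rising factorial `(n)_i = n(n+1)⋯(n+i−1)`, with `(n)_0 = 1`. -/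
noncomputable def risingFac (n i : ℕ) : ℝ := ∏ j ∈ Finset.range i, ((n : ℝ) + j)

/-- `p_k(n,a) = Σ_{i=0}^{k} C(k,i)·(n)_i·a^{k−i}`. -/
noncomputable def pCoef (n : ℕ) (a : ℝ) (k : ℕ) : ℝ :=
  ∑ i ∈ Finset.range (k + 1), (Nat.choose k i : ℝ) * risingFac n i * a ^ (k - i)

/-- Generalized Baskakov basis function `W_{n,k}^a(x)`. -/
noncomputable def W (n : ℕ) (a : ℝ) (k : ℕ) (x : ℝ) : ℝ :=
  Real.exp (-(a * x) / (1 + x)) * (pCoef n a k / (Nat.factorial k : ℝ)) * x ^ k /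
    (1 + x) ^ (k + n)

/-- Stancu-type operator `L_{n,a}^{α,β}(f;x) = Σ_k W_{n,k}^a(x) f((k+α)/(n+β))`. -/
noncomputable def Lop (n : ℕ) (a α β : ℝ) (f : ℝ → ℝ) (x : ℝ) : ℝ :=
  ∑' k : ℕ, W n a k x * f (((k : ℝ) + α) / ((n : ℝ) + β))

/-- Generalized Baskakov–Kantorovich–Stancu operator `T_{n,a}^{α,β}(f;x)`. -/
noncomputable def TKS (n : ℕ) (a α β : ℝ) (f : ℝ → ℝ) (x : ℝ) : ℝ :=
  ((n : ℝ) + β) *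
    ∑' k : ℕ, W n a k x *
      ∫ t in (((k : ℝ) + α) / ((n : ℝ) + β))..(((k : ℝ) + α + 1) / ((n : ℝ) + β)), f t



lemma risingFac_succ (n i : ℕ) : risingFac n (i+1) = risingFac n i * ((n:ℝ) + i) := by
  simp [risingFac, Finset.prod_range_succ]

lemma risingFac_nonneg (n i : ℕ) : 0 ≤ risingFac n i :=
  Finset.prod_nonneg fun j _ => by positivity

lemma risingFac_eq_choose (m i : ℕ) :
    risingFac (m+1) i = (Nat.factorial i : ℝ) * ((i + m).choose m : ℝ) := by
  induction i with
  | zero => simp [risingFac]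
  | succ i ih =>
    rw [risingFac_succ, ih]
    have key : (i + m + 1) * ((i + m).choose m) = ((i + 1 + m).choose m) * (i + 1) := by
      have h1 := Nat.add_one_mul_choose_eq (i + m) i
      have h2 : (i + m).choose ((i+m) - i) = (i + m).choose i := Nat.choose_symm (by omega)
      have h3 : (i + m + 1).choose ((i+m+1) - (i+1)) = (i + m + 1).choose (i+1) :=
        Nat.choose_symm (by omega)
      simp only [show (i+m) - i = m by omega, show (i+m+1) - (i+1) = m by omega] at h2 h3
      have h4 : (i + 1 + m) = (i + m + 1) := by omega
      rw [h2, h4, h3]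
      simpa [Nat.succ_eq_add_one] using h1
    have keyR : ((i:ℝ) + m + 1) * ((i + m).choose m : ℝ) = ((i + 1 + m).choose m : ℝ) * (i + 1) := by
      exact_mod_cast key
    push_cast [Nat.factorial_succ]
    nlinarith [keyR]

lemma pCoef_nonneg (n : ℕ) {a : ℝ} (ha : 0 ≤ a) (k : ℕ) : 0 ≤ pCoef n a k :=
  Finset.sum_nonneg fun i _ => by
    have := risingFac_nonneg n i; positivity

lemma pCoef_div_fact (m : ℕ) (a : ℝ) (k : ℕ) :
    pCoef (m+1) a k / (Nat.factorial k : ℝ)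
      = ∑ i ∈ Finset.range (k+1),
          (((i+m).choose m : ℝ)) * (a ^ (k-i) / (Nat.factorial (k-i) : ℝ)) := by
  rw [pCoef, Finset.sum_div]
  refine Finset.sum_congr rfl fun i hi => ?_
  have hik : i ≤ k := by simpa [Nat.lt_succ_iff] using Finset.mem_range.mp hi
  rw [risingFac_eq_choose]
  have key : ((k.choose i : ℝ)) * (Nat.factorial i : ℝ) * (Nat.factorial (k-i) : ℝ)
      = (Nat.factorial k : ℝ) := by
    exact_mod_cast Nat.choose_mul_factorial_mul_factorial hik
  have h1 : (Nat.factorial k : ℝ) ≠ 0 := by positivity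
  have h2 : (Nat.factorial (k-i) : ℝ) ≠ 0 := by positivity
  field_simp
  linear_combination (((i+m).choose m : ℝ)) * a ^ (k-i) * key


lemma W_nonneg {n : ℕ} {a x : ℝ} (ha : 0 ≤ a) (hx : 0 ≤ x) (k : ℕ) : 0 ≤ W n a k x := by
  have h1 := pCoef_nonneg n ha k
  have h2 : (0:ℝ) < 1 + x := by linarith
  unfold W
  positivity

lemma W_eq (m : ℕ) (a x : ℝ) (hx : 0 < x) (k : ℕ) :
    W (m+1) a k x = (Real.exp (-(a * x) / (1 + x)) / (1+x)^(m+1)) *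
      (pCoef (m+1) a k / (Nat.factorial k : ℝ) * (x/(1+x)) ^ k) := by
  have h2 : (0:ℝ) < 1 + x := by linarith
  unfold W
  rw [div_pow, pow_add]
  field_simp

lemma W_hasSum {n : ℕ} (hn : 1 ≤ n) {a x : ℝ} (ha : 0 ≤ a) (hx : 0 < x) :
    HasSum (fun k => W n a k x) 1 := by
  obtain ⟨m, rfl⟩ : ∃ m, n = m + 1 := ⟨n - 1, by omega⟩
  set y : ℝ := x / (1 + x) with hy
  have h1x : (0:ℝ) < 1 + x := by linarith
  have hy0 : 0 ≤ y := by positivity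
  have hy1 : y < 1 := by rw [hy, div_lt_one h1x]; linarith
  have hynorm : ‖y‖ < 1 := by rwa [Real.norm_eq_abs, abs_of_nonneg hy0]
  have hF : HasSum (fun i => ((i + m).choose m : ℝ) * y ^ i) (1 / (1 - y)^(m+1)) :=
    hasSum_choose_mul_geometric_of_norm_lt_one m hynorm
  have hG : HasSum (fun j => (a*y) ^ j / (Nat.factorial j : ℝ)) (Real.exp (a*y)) := by
    rw [Real.exp_eq_exp_ℝ]
    exact NormedSpace.expSeries_div_hasSum_exp (a*y)
  have hFn : Summable (fun i => ‖((i + m).choose m : ℝ) * y ^ i‖) := by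
    have : (fun i => ‖((i + m).choose m : ℝ) * y ^ i‖)
        = fun i => ((i + m).choose m : ℝ) * y ^ i :=
      funext fun i => Real.norm_of_nonneg (by positivity)
    rw [this]; exact hF.summable
  have hGn : Summable (fun j => ‖(a*y) ^ j / (Nat.factorial j : ℝ)‖) := by
    have : (fun j => ‖(a*y) ^ j / (Nat.factorial j : ℝ)‖)
        = fun j => (a*y) ^ j / (Nat.factorial j : ℝ) := by
      refine funext fun j => Real.norm_of_nonneg ?_
      have : 0 ≤ a * y := mul_nonneg ha hy0
      positivity
    rw [this]; exact hG.summable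
  have hprod := hasSum_sum_range_mul_of_summable_norm hFn hGn
  rw [hF.tsum_eq, hG.tsum_eq] at hprod
  have hterm : ∀ k, (∑ i ∈ Finset.range (k+1),
      (((i + m).choose m : ℝ) * y ^ i) * ((a*y) ^ (k-i) / (Nat.factorial (k-i) : ℝ)))
      = pCoef (m+1) a k / (Nat.factorial k : ℝ) * y ^ k := by
    intro k
    rw [pCoef_div_fact, Finset.sum_mul]
    refine Finset.sum_congr rfl fun i hi => ?_
    have hik : i ≤ k := by simpa [Nat.lt_succ_iff] using Finset.mem_range.mp hi
    have hyk : y ^ i * y ^ (k - i) = y ^ k := by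
      rw [← pow_add]; congr 1; omega
    rw [mul_pow, ← hyk]
    ring
  simp only [hterm] at hprod
  have h1y : 1 - y = 1/(1+x) := by rw [hy]; field_simp; ring
  have hay : a * y = a * x / (1+x) := by rw [hy, mul_div_assoc]
  have hW := hprod.mul_left (Real.exp (-(a * x) / (1 + x)) / (1+x)^(m+1))
  have hfun : (fun k => Real.exp (-(a * x) / (1 + x)) / (1+x)^(m+1) *
      (pCoef (m+1) a k / (Nat.factorial k : ℝ) * y ^ k)) = fun k => W (m+1) a k x := by
    refine funext fun k => ?_
    rw [W_eq m a x hx k]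
  have hval : Real.exp (-(a * x) / (1 + x)) / (1+x)^(m+1) *
      (1 / (1 - y)^(m+1) * Real.exp (a*y)) = 1 := by
    have hexp : Real.exp (-(a * x) / (1 + x)) * Real.exp (a * x / (1+x)) = 1 := by
      rw [← Real.exp_add, neg_div, neg_add_cancel, Real.exp_zero]
    rw [h1y, hay]
    rw [div_pow, one_pow]
    rw [one_div, inv_div, div_one]
    rw [div_mul_eq_mul_div, mul_div_assoc, mul_div_cancel_left₀ _ (by positivity : ((1:ℝ)+x)^(m+1) ≠ 0)]
    exact hexp
  rw [hfun, hval] at hW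
  exact hW


lemma W_le (m : ℕ) {a x : ℝ} (ha : 0 ≤ a) (hx : 0 < x) (k : ℕ) :
    W (m+1) a k x ≤ Real.exp a * (((k+m).choose m : ℝ) * (x/(1+x))^k) := by
  have h1x : (0:ℝ) < 1 + x := by linarith
  have hy0 : (0:ℝ) ≤ x/(1+x) := by positivity
  rw [W_eq m a x hx k]
  have hc1 : Real.exp (-(a * x) / (1 + x)) / (1+x)^(m+1) ≤ 1 := by
    rw [div_le_one (by positivity)]
    have h1 : Real.exp (-(a * x) / (1 + x)) ≤ 1 := by
      rw [Real.exp_le_one_iff]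
      have : 0 ≤ a * x / (1+x) := by positivity
      rw [neg_div]; linarith
    have h2 : (1:ℝ) ≤ (1+x)^(m+1) := one_le_pow₀ (by linarith)
    linarith
  have hc0 : 0 ≤ Real.exp (-(a * x) / (1 + x)) / (1+x)^(m+1) := by positivity
  have hP : pCoef (m+1) a k / (Nat.factorial k : ℝ) ≤ Real.exp a * ((k+m).choose m : ℝ) := by
    rw [pCoef_div_fact]
    calc ∑ i ∈ Finset.range (k+1), (((i+m).choose m : ℝ)) * (a ^ (k-i) / (Nat.factorial (k-i) : ℝ))
        ≤ ∑ i ∈ Finset.range (k+1), (((k+m).choose m : ℝ)) * (a ^ (k-i) / (Nat.factorial (k-i) : ℝ)) := by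
          refine Finset.sum_le_sum fun i hi => ?_
          have hik : i ≤ k := by simpa [Nat.lt_succ_iff] using Finset.mem_range.mp hi
          have hch : ((i+m).choose m : ℝ) ≤ ((k+m).choose m : ℝ) := by
            exact_mod_cast Nat.choose_le_choose m (by omega)
          have : (0:ℝ) ≤ a ^ (k-i) / (Nat.factorial (k-i) : ℝ) := by positivity
          exact mul_le_mul_of_nonneg_right hch this
      _ = ((k+m).choose m : ℝ) * ∑ i ∈ Finset.range (k+1), a ^ (k-i) / (Nat.factorial (k-i) : ℝ) := by
          rw [Finset.mul_sum]
      _ = ((k+m).choose m : ℝ) * ∑ j ∈ Finset.range (k+1), a ^ j / (Nat.factorial j : ℝ) := by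
          congr 1
          exact Finset.sum_range_reflect (fun j => a ^ j / (Nat.factorial j : ℝ)) (k+1)
      _ ≤ ((k+m).choose m : ℝ) * Real.exp a := by
          refine mul_le_mul_of_nonneg_left (Real.sum_le_exp_of_nonneg ha (k+1)) (by positivity)
      _ = Real.exp a * ((k+m).choose m : ℝ) := mul_comm _ _
  calc Real.exp (-(a * x) / (1 + x)) / (1+x)^(m+1) *
        (pCoef (m+1) a k / (Nat.factorial k : ℝ) * (x/(1+x)) ^ k)
      ≤ 1 * (Real.exp a * ((k+m).choose m : ℝ) * (x/(1+x)) ^ k) := by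
        have hpk : 0 ≤ pCoef (m+1) a k / (Nat.factorial k : ℝ) := by
          have := pCoef_nonneg (m+1) ha k; positivity
        have hyk : (0:ℝ) ≤ (x/(1+x))^k := by positivity
        exact mul_le_mul hc1 (mul_le_mul_of_nonneg_right hP hyk)
          (mul_nonneg hpk hyk) one_pos.le
    _ = Real.exp a * (((k+m).choose m : ℝ) * (x/(1+x))^k) := by ring

lemma choose_sq_le (m k : ℕ) {γ : ℝ} (hγ : 0 ≤ γ) :
    ((k:ℝ)+γ)^2 * ((k+m).choose m : ℝ)
      ≤ (γ+1)^2 * ((m:ℝ)+1) * ((m:ℝ)+2) * ((k+(m+2)).choose (m+2) : ℝ) := by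
  have h1' : (k+m+1) * ((k+m).choose m) = ((k+m+1).choose (m+1)) * (m+1) := by
    simpa [Nat.succ_eq_add_one] using Nat.add_one_mul_choose_eq (k+m) m
  have h2' : (k+m+2) * ((k+m+1).choose (m+1)) = ((k+m+2).choose (m+2)) * (m+2) := by
    simpa [Nat.succ_eq_add_one, show k+m+1+1 = k+m+2 from rfl] using
      Nat.add_one_mul_choose_eq (k+m+1) (m+1)
  have H1 : ((k:ℝ)+m+1) * ((k+m).choose m : ℝ) = (((k+m+1).choose (m+1)) : ℝ) * ((m:ℝ)+1) := by
    exact_mod_cast h1'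
  have H2 : ((k:ℝ)+m+2) * (((k+m+1).choose (m+1)) : ℝ)
      = (((k+m+2).choose (m+2)) : ℝ) * ((m:ℝ)+2) := by
    exact_mod_cast h2'
  have he : k+(m+2) = k+m+2 := by omega
  rw [he]
  have hI : ((m:ℝ)+1) * ((m:ℝ)+2) * (((k+m+2).choose (m+2)) : ℝ)
      = ((k:ℝ)+m+1) * ((k:ℝ)+m+2) * ((k+m).choose m : ℝ) := by
    linear_combination (-((m:ℝ)+1)) * H2 + (-((k:ℝ)+(m:ℝ)+2)) * H1
  have hC0 : (0:ℝ) ≤ ((k+m).choose m : ℝ) := by positivity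
  have hk0 : (0:ℝ) ≤ (k:ℝ) := Nat.cast_nonneg k
  have hm0 : (0:ℝ) ≤ (m:ℝ) := Nat.cast_nonneg m
  have hkey : ((k:ℝ)+γ)^2 ≤ (γ+1)^2 * (((k:ℝ)+m+1) * ((k:ℝ)+m+2)) := by
    nlinarith [sq_nonneg ((k:ℝ)+γ), sq_nonneg ((k:ℝ)+1), mul_nonneg hk0 hγ, mul_nonneg hm0 hγ,
      mul_nonneg hk0 hm0, sq_nonneg ((γ+1)*((k:ℝ)+1))]
  calc ((k:ℝ)+γ)^2 * ((k+m).choose m : ℝ)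
      ≤ ((γ+1)^2 * (((k:ℝ)+m+1) * ((k:ℝ)+m+2))) * ((k+m).choose m : ℝ) :=
        mul_le_mul_of_nonneg_right hkey hC0
    _ = (γ+1)^2 * (((k:ℝ)+m+1) * ((k:ℝ)+m+2) * ((k+m).choose m : ℝ)) := by ring
    _ = (γ+1)^2 * (((m:ℝ)+1) * ((m:ℝ)+2) * (((k+m+2).choose (m+2)) : ℝ)) := by rw [hI]
    _ = (γ+1)^2 * ((m:ℝ)+1) * ((m:ℝ)+2) * (((k+m+2).choose (m+2)) : ℝ) := by ring

lemma summable_W_mul_sq (m : ℕ) {a x : ℝ} (ha : 0 ≤ a) (hx : 0 < x) {γ : ℝ} (hγ : 0 ≤ γ) :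
    Summable (fun k => W (m+1) a k x * ((k:ℝ)+γ)^2) := by
  have h1x : (0:ℝ) < 1 + x := by linarith
  have hy0 : (0:ℝ) ≤ x/(1+x) := by positivity
  have hy1 : x/(1+x) < 1 := by rw [div_lt_one h1x]; linarith
  have hynorm : ‖x/(1+x)‖ < 1 := by rwa [Real.norm_eq_abs, abs_of_nonneg hy0]
  have hs := (summable_choose_mul_geometric_of_norm_lt_one (m+2) hynorm).mul_left
    (Real.exp a * ((γ+1)^2 * ((m:ℝ)+1) * ((m:ℝ)+2)))
  refine Summable.of_nonneg_of_le
    (fun k => mul_nonneg (W_nonneg ha hx.le k) (by positivity)) (fun k => ?_) hs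
  have h1 : W (m+1) a k x * ((k:ℝ)+γ)^2
      ≤ (Real.exp a * (((k+m).choose m : ℝ) * (x/(1+x))^k)) * ((k:ℝ)+γ)^2 :=
    mul_le_mul_of_nonneg_right (W_le m ha hx k) (by positivity)
  refine h1.trans ?_
  have h2 := choose_sq_le m k hγ
  have hyk : (0:ℝ) ≤ (x/(1+x))^k := by positivity
  have hexp : (0:ℝ) ≤ Real.exp a := (Real.exp_pos a).le
  calc (Real.exp a * (((k+m).choose m : ℝ) * (x/(1+x))^k)) * ((k:ℝ)+γ)^2
      = Real.exp a * ((((k:ℝ)+γ)^2 * ((k+m).choose m : ℝ)) * (x/(1+x))^k) := by ring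
    _ ≤ Real.exp a * (((γ+1)^2 * ((m:ℝ)+1) * ((m:ℝ)+2) * ((k+(m+2)).choose (m+2) : ℝ))
          * (x/(1+x))^k) := by
        refine mul_le_mul_of_nonneg_left (mul_le_mul_of_nonneg_right h2 hyk) hexp
    _ = Real.exp a * ((γ+1)^2 * ((m:ℝ)+1) * ((m:ℝ)+2)) *
          (((k+(m+2)).choose (m+2) : ℝ) * (x/(1+x))^k) := by ring


lemma rpow_le_one_add {u θ : ℝ} (hu : 0 ≤ u) (hθ0 : 0 < θ) (hθ1 : θ ≤ 1) :
    u ^ θ ≤ 1 + u := by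
  rcases le_or_gt u 1 with h | h
  · have := Real.rpow_le_one hu h hθ0.le
    linarith
  · have h2 : u ^ θ ≤ u ^ (1:ℝ) := Real.rpow_le_rpow_of_exponent_le h.le hθ1
    rw [Real.rpow_one] at h2
    linarith

lemma tsum_mul_rpow_le {w u : ℕ → ℝ} (hw : ∀ k, 0 ≤ w k) (hu : ∀ k, 0 ≤ u k)
    (hws : HasSum w 1) (hsum : Summable fun k => w k * u k) {θ : ℝ}
    (hθ0 : 0 < θ) (hθ1 : θ ≤ 1) :
    ∑' k, w k * u k ^ θ ≤ (∑' k, w k * u k) ^ θ := by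
  have hL : Summable (fun k => w k * u k ^ θ) := by
    refine Summable.of_nonneg_of_le (fun k => mul_nonneg (hw k) (Real.rpow_nonneg (hu k) θ))
      (fun k => ?_) (hws.summable.add hsum)
    have h1 : u k ^ θ ≤ 1 + u k := rpow_le_one_add (hu k) hθ0 hθ1
    have := mul_le_mul_of_nonneg_left h1 (hw k)
    nlinarith [hw k]
  have htot : 0 ≤ ∑' k, w k * u k := tsum_nonneg fun k => mul_nonneg (hw k) (hu k)
  refine Summable.tsum_le_of_sum_le hL fun F => ?_
  set s := ∑ k ∈ F, w k with hs
  have hs0 : 0 ≤ s := Finset.sum_nonneg fun k _ => hw k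
  have hs1 : s ≤ 1 := sum_le_hasSum F (fun k _ => hw k) hws
  rcases eq_or_lt_of_le hs0 with h0 | hps
  · have hzero : ∀ k ∈ F, w k = 0 := by
      intro k hk
      have := (Finset.sum_eq_zero_iff_of_nonneg (fun i _ => hw i)).mp h0.symm
      exact this k hk
    have : ∑ k ∈ F, w k * u k ^ θ = 0 :=
      Finset.sum_eq_zero fun k hk => by rw [hzero k hk, zero_mul]
    rw [this]
    exact Real.rpow_nonneg htot θ
  · have hp : (1:ℝ) ≤ 1/θ := by
      rw [le_div_iff₀ hθ0]; linarith
    have key := Real.arith_mean_le_rpow_mean F (fun k => w k / s) (fun k => u k ^ θ)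
      (fun i _ => div_nonneg (hw i) hs0) ?_ (fun i _ => Real.rpow_nonneg (hu i) θ) hp
    · have hexp : ∀ k, (u k ^ θ) ^ (1/θ:ℝ) = u k := fun k => by
        rw [← Real.rpow_mul (hu k), mul_one_div, div_self (ne_of_gt hθ0), Real.rpow_one]
      have hFu : 0 ≤ ∑ k ∈ F, w k * u k :=
        Finset.sum_nonneg fun k _ => mul_nonneg (hw k) (hu k)
      have e1 : ∑ k ∈ F, (w k / s) * (u k ^ θ) ^ (1/θ:ℝ) = (∑ k ∈ F, w k * u k)/s := by
        rw [Finset.sum_div]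
        exact Finset.sum_congr rfl fun k hk => by rw [hexp k]; ring
      rw [e1, one_div_one_div] at key
      have e2 : ∑ k ∈ F, w k * u k ^ θ = s * ∑ k ∈ F, (w k / s) * u k ^ θ := by
        rw [Finset.mul_sum]
        exact Finset.sum_congr rfl fun k _ => by field_simp
      have hFle : ∑ k ∈ F, w k * u k ≤ ∑' k, w k * u k :=
        Summable.sum_le_tsum F (fun k _ => mul_nonneg (hw k) (hu k)) hsum
      have e3 : s * ((∑ k ∈ F, w k * u k)/s)^θ = s^(1-θ:ℝ) * (∑ k ∈ F, w k * u k)^θ := by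
        rw [Real.div_rpow hFu hs0, Real.rpow_sub hps, Real.rpow_one]
        ring
      calc ∑ k ∈ F, w k * u k ^ θ
          = s * ∑ k ∈ F, (w k / s) * u k ^ θ := e2
        _ ≤ s * ((∑ k ∈ F, w k * u k)/s)^θ := mul_le_mul_of_nonneg_left key hs0
        _ = s^(1-θ:ℝ) * (∑ k ∈ F, w k * u k)^θ := e3
        _ ≤ 1 * (∑' k, w k * u k)^θ := by
            refine mul_le_mul (Real.rpow_le_one hs0 hs1 (by linarith))
              (Real.rpow_le_rpow hFu hFle hθ0.le) (Real.rpow_nonneg hFu θ) one_pos.le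
        _ = (∑' k, w k * u k)^θ := one_mul _
    · rw [← Finset.sum_div, ← hs, div_self (ne_of_gt hps)]


lemma integral_abs_rpow_le {c d x r : ℝ} (hcd : c ≤ d) (hr0 : 0 < r) (hr2 : r < 2) :
    (∫ t in c..d, |t - x| ^ r) ≤ (∫ t in c..d, (t - x)^2) ^ (r/2) * (d - c) ^ (1 - r/2) := by
  set μ := volume.restrict (Set.Ioc c d) with hμ
  have hpq : Real.HolderConjugate (2/r) (2/(2-r)) := by
    constructor
    · rw [inv_div, inv_div, inv_one]; ring
    · exact div_pos two_pos hr0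
    · exact div_pos two_pos (by linarith)
  have hFc : Continuous (fun t : ℝ => |t - x| ^ r) := by
    apply Continuous.rpow_const (by continuity)
    intro t; right; exact hr0.le
  set B : ℝ := |c| + |d| + |x| + 1 with hB
  have hF : MemLp (fun t : ℝ => |t - x| ^ r) (ENNReal.ofReal (2/r)) μ := by
    refine MemLp.of_bound hFc.aestronglyMeasurable (B ^ r) ?_
    refine (ae_restrict_mem measurableSet_Ioc).mono fun t ht => ?_
    have h2 : |t| ≤ |c| + |d| := by
      have := neg_abs_le c; have := le_abs_self d
      have := abs_nonneg c; have := abs_nonneg d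
      have h3 := ht.1; have h4 := ht.2
      rw [abs_le]; constructor <;> linarith
    have h1 : |t - x| ≤ B := by
      have := abs_sub t x
      have := le_abs_self x
      have := abs_nonneg x
      calc |t - x| ≤ |t| + |x| := abs_sub _ _
        _ ≤ B := by rw [hB]; linarith
    rw [Real.norm_of_nonneg (Real.rpow_nonneg (abs_nonneg _) r)]
    exact Real.rpow_le_rpow (abs_nonneg _) h1 hr0.le
  have hG : MemLp (fun _ : ℝ => (1:ℝ)) (ENNReal.ofReal (2/(2-r))) μ := memLp_const 1
  have key := MeasureTheory.integral_mul_norm_le_Lp_mul_Lq hpq hF hG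
  have eF : (∫ a, ‖|a - x| ^ r‖ ^ (2/r:ℝ) ∂μ) = ∫ t in c..d, (t-x)^2 := by
    rw [intervalIntegral.integral_of_le hcd]
    refine integral_congr_ae (Eventually.of_forall fun t => ?_)
    show ‖|t - x| ^ r‖ ^ (2/r:ℝ) = (t - x)^2
    rw [Real.norm_of_nonneg (Real.rpow_nonneg (abs_nonneg _) r),
      ← Real.rpow_mul (abs_nonneg _), show r * (2/r) = 2 by field_simp,
      show (2:ℝ) = ((2:ℕ):ℝ) by norm_num, Real.rpow_natCast, sq_abs]
  have eG : (∫ a, ‖(1:ℝ)‖ ^ (2/(2-r):ℝ) ∂μ) = d - c := by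
    simp only [norm_one, Real.one_rpow]
    rw [integral_const, smul_eq_mul, mul_one, measureReal_def, Measure.restrict_apply_univ, Real.volume_Ioc,
      ENNReal.toReal_ofReal (by linarith)]
  have eL : (∫ a, ‖|a - x| ^ r‖ * ‖(1:ℝ)‖ ∂μ) = ∫ t in c..d, |t - x| ^ r := by
    rw [intervalIntegral.integral_of_le hcd]
    refine integral_congr_ae (Eventually.of_forall fun t => ?_)
    show ‖|t - x| ^ r‖ * ‖(1:ℝ)‖ = |t - x| ^ r
    rw [norm_one, mul_one, Real.norm_of_nonneg (Real.rpow_nonneg (abs_nonneg _) r)]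
  rw [eF, eG, eL] at key
  rw [one_div_div, one_div_div, show (2 - r)/2 = 1 - r/2 by ring] at key
  exact key


lemma tsum_chain (Wk Jf J2 Jr : ℕ → ℝ) (N fx θ C : ℝ)
    (hW0 : ∀ k, 0 ≤ Wk k) (hWsum : HasSum Wk 1) (hN0 : 0 < N)
    (hJ2 : ∀ k, 0 ≤ J2 k) (hJr0 : ∀ k, 0 ≤ Jr k) (hC : 0 ≤ C)
    (hB1 : ∀ k, |Jf k - fx / N| ≤ C * Jr k)
    (hB2 : ∀ k, Jr k ≤ (J2 k) ^ θ * (1/N) ^ (1-θ))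
    (hθ0 : 0 < θ) (hθ1 : θ ≤ 1)
    (SJf : Summable fun k => Wk k * Jf k)
    (SJ2 : Summable fun k => Wk k * J2 k)
    (SJr : Summable fun k => Wk k * Jr k) :
    |N * ∑' k, Wk k * Jf k - fx| ≤ C * (N * ∑' k, Wk k * J2 k) ^ θ := by
  have hNne : (N : ℝ) ≠ 0 := hN0.ne'
  have S1 : Summable (fun k => Wk k * |Jf k - fx / N|) := by
    refine Summable.of_nonneg_of_le (fun k => mul_nonneg (hW0 k) (abs_nonneg _))
      (fun k => ?_) (SJr.mul_left C)
    calc Wk k * |Jf k - fx / N| ≤ Wk k * (C * Jr k) :=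
          mul_le_mul_of_nonneg_left (hB1 k) (hW0 k)
      _ = C * (Wk k * Jr k) := by ring
  have SCr : Summable (fun k => Wk k * (C * Jr k)) :=
    (SJr.mul_left C).congr (fun k => by ring)
  have S3 : Summable (fun k => Wk k * (J2 k) ^ θ) := by
    refine Summable.of_nonneg_of_le
      (fun k => mul_nonneg (hW0 k) (Real.rpow_nonneg (hJ2 k) θ))
      (fun k => ?_) (hWsum.summable.add SJ2)
    calc Wk k * (J2 k) ^ θ ≤ Wk k * (1 + J2 k) :=
          mul_le_mul_of_nonneg_left (rpow_le_one_add (hJ2 k) hθ0 hθ1) (hW0 k)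
      _ = Wk k + Wk k * J2 k := by ring
  have SRHS : Summable (fun k => Wk k * ((J2 k) ^ θ * (1/N) ^ (1-θ))) :=
    (S3.mul_right ((1/N) ^ (1-θ))).congr (fun k => by ring)
  have SNJ2 : Summable (fun k => Wk k * (N * J2 k)) :=
    (SJ2.mul_left N).congr (fun k => by ring)
  -- step 0
  have h3 : ∑' k, Wk k * (fx / N) = fx / N := by
    rw [tsum_mul_right, hWsum.tsum_eq, one_mul]
  have h2 : ∑' k, Wk k * (Jf k - fx / N)
      = (∑' k, Wk k * Jf k) - fx / N := by
    have h1 : (fun k => Wk k * (Jf k - fx / N))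
        = fun k => Wk k * Jf k - Wk k * (fx / N) := funext fun k => mul_sub _ _ _
    rw [h1, Summable.tsum_sub SJf (hWsum.summable.mul_right _), h3]
  have step0 : N * ∑' k, Wk k * Jf k - fx = N * ∑' k, Wk k * (Jf k - fx / N) := by
    rw [h2, mul_sub, mul_div_cancel₀ _ hNne]
  -- step 2
  have step2 : |∑' k, Wk k * (Jf k - fx / N)| ≤ ∑' k, Wk k * |Jf k - fx / N| := by
    have hs : Summable (fun k => ‖Wk k * (Jf k - fx / N)‖) := by
      refine S1.congr fun k => ?_
      rw [norm_mul, Real.norm_of_nonneg (hW0 k), Real.norm_eq_abs]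
    have := norm_tsum_le_tsum_norm hs
    rw [Real.norm_eq_abs] at this
    refine this.trans (le_of_eq (tsum_congr fun k => ?_))
    rw [norm_mul, Real.norm_of_nonneg (hW0 k), Real.norm_eq_abs]
  -- step 3
  have step3 : ∑' k, Wk k * |Jf k - fx / N| ≤ C * ∑' k, Wk k * Jr k := by
    calc ∑' k, Wk k * |Jf k - fx / N| ≤ ∑' k, Wk k * (C * Jr k) :=
          Summable.tsum_le_tsum (fun k => mul_le_mul_of_nonneg_left (hB1 k) (hW0 k)) S1 SCr
      _ = C * ∑' k, Wk k * Jr k := by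
          rw [← tsum_mul_left]; exact tsum_congr fun k => by ring
  -- step 4
  have step4 : ∑' k, Wk k * Jr k ≤ (1/N) ^ (1-θ) * ∑' k, Wk k * (J2 k) ^ θ := by
    calc ∑' k, Wk k * Jr k ≤ ∑' k, Wk k * ((J2 k) ^ θ * (1/N) ^ (1-θ)) :=
          Summable.tsum_le_tsum (fun k => mul_le_mul_of_nonneg_left (hB2 k) (hW0 k)) SJr SRHS
      _ = (1/N) ^ (1-θ) * ∑' k, Wk k * (J2 k) ^ θ := by
          rw [← tsum_mul_left]; exact tsum_congr fun k => by ring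
  -- Jensen
  have jensen : ∑' k, Wk k * (N * J2 k) ^ θ ≤ (∑' k, Wk k * (N * J2 k)) ^ θ :=
    tsum_mul_rpow_le hW0 (fun k => mul_nonneg hN0.le (hJ2 k)) hWsum SNJ2 hθ0 hθ1
  have hrw1 : ∑' k, Wk k * (N * J2 k) ^ θ = N ^ θ * ∑' k, Wk k * (J2 k) ^ θ := by
    rw [← tsum_mul_left]
    refine tsum_congr fun k => ?_
    rw [Real.mul_rpow hN0.le (hJ2 k)]; ring
  have hrw2 : ∑' k, Wk k * (N * J2 k) = N * ∑' k, Wk k * J2 k := by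
    rw [← tsum_mul_left]; exact tsum_congr fun k => by ring
  -- algebra N * (1/N)^(1-θ) = N^θ
  have hpow : N * (1/N) ^ (1-θ) = N ^ θ := by
    rw [one_div, Real.inv_rpow hN0.le]
    have hNe : N ^ (1-θ:ℝ) ≠ 0 := (Real.rpow_pos_of_pos hN0 _).ne'
    field_simp
    rw [← Real.rpow_add hN0, sub_add_cancel, Real.rpow_one]
  -- assemble
  have hT2 : 0 ≤ ∑' k, Wk k * Jr k := tsum_nonneg fun k => mul_nonneg (hW0 k) (hJr0 k)
  have hT3 : 0 ≤ ∑' k, Wk k * (J2 k) ^ θ :=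
    tsum_nonneg fun k => mul_nonneg (hW0 k) (Real.rpow_nonneg (hJ2 k) θ)
  calc |N * ∑' k, Wk k * Jf k - fx|
      = N * |∑' k, Wk k * (Jf k - fx / N)| := by
        rw [step0, abs_mul, abs_of_pos hN0]
    _ ≤ N * (∑' k, Wk k * |Jf k - fx / N|) := mul_le_mul_of_nonneg_left step2 hN0.le
    _ ≤ N * (C * ∑' k, Wk k * Jr k) := mul_le_mul_of_nonneg_left step3 hN0.le
    _ = (N * C) * ∑' k, Wk k * Jr k := by ring
    _ ≤ (N * C) * ((1/N) ^ (1-θ) * ∑' k, Wk k * (J2 k) ^ θ) :=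
        mul_le_mul_of_nonneg_left step4 (mul_nonneg hN0.le hC)
    _ = C * ((N * (1/N) ^ (1-θ)) * ∑' k, Wk k * (J2 k) ^ θ) := by ring
    _ = C * (N ^ θ * ∑' k, Wk k * (J2 k) ^ θ) := by rw [hpow]
    _ = C * ∑' k, Wk k * (N * J2 k) ^ θ := by rw [hrw1]
    _ ≤ C * (∑' k, Wk k * (N * J2 k)) ^ θ := mul_le_mul_of_nonneg_left jensen hC
    _ = C * (N * ∑' k, Wk k * J2 k) ^ θ := by rw [hrw2]


set_option maxHeartbeats 1000000 in
theorem Top_lipschitz_estimate (a : ℝ) (ha : 0 ≤ a) (α β : ℝ) (hα : 0 ≤ α) (hαβ : α ≤ β)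
    (r : ℝ) (hr0 : 0 < r) (hr1 : r ≤ 1) (M : ℝ) (hM : 0 < M) (f : ℝ → ℝ)
    (hf : ContinuousOn f (Set.Ici 0))
    (hlip : ∀ t x : ℝ, 0 < t → 0 < x →
      |f t - f x| ≤ M * |t - x| ^ r / (t + x) ^ (r / 2)) :
    ∀ n : ℕ, 1 ≤ n → ∀ x : ℝ, 0 < x →
      |TKS n a α β f x - f x| ≤
        M * (TKS n a α β (fun t => (t - x) ^ 2) x / x) ^ (r / 2) := by
  intro n hn x hx
  have hβ0 : 0 ≤ β := hα.trans hαβ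
  obtain ⟨m, rfl⟩ : ∃ m, n = m + 1 := ⟨n - 1, by omega⟩
  have hθ0 : 0 < r/2 := by linarith
  have hθ1 : r/2 ≤ 1 := by linarith
  have hr2 : r < 2 := by linarith
  set N : ℝ := ((m+1:ℕ):ℝ) + β with hNdef
  have hN1 : (1:ℝ) ≤ N := by
    have : (1:ℝ) ≤ ((m+1:ℕ):ℝ) := by exact_mod_cast hn
    rw [hNdef]; linarith
  have hN0 : (0:ℝ) < N := by linarith
  set γ : ℝ := β + 1 + x with hγdef
  have hγ0 : (0:ℝ) ≤ γ := by rw [hγdef]; linarith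
  have hγx : x ≤ γ := by rw [hγdef]; linarith
  have hkγ : ∀ k : ℕ, (1:ℝ) ≤ (k:ℝ) + γ := fun k => by
    have := Nat.cast_nonneg (α := ℝ) k
    rw [hγdef]; linarith
  set C : ℝ := M / x ^ (r/2) with hCdef
  have hxr : 0 < x ^ (r/2) := Real.rpow_pos_of_pos hx _
  have hC0 : 0 ≤ C := by rw [hCdef]; positivity
  set c : ℕ → ℝ := fun k => ((k:ℝ) + α)/N with hcdef
  set dd : ℕ → ℝ := fun k => ((k:ℝ) + α + 1)/N with hddef
  set Jf : ℕ → ℝ := fun k => ∫ t in c k..dd k, f t with hJfdef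
  set J2 : ℕ → ℝ := fun k => ∫ t in c k..dd k, (t - x)^2 with hJ2def
  set Jr : ℕ → ℝ := fun k => ∫ t in c k..dd k, |t - x| ^ r with hJrdef
  have hc0 : ∀ k, 0 ≤ c k := fun k => by
    have := Nat.cast_nonneg (α := ℝ) k
    exact div_nonneg (by linarith) hN0.le
  have hle : ∀ k, c k ≤ dd k := fun k => by
    show ((k:ℝ) + α)/N ≤ ((k:ℝ) + α + 1)/N
    exact (div_le_div_iff_of_pos_right hN0).mpr (by linarith)
  have hlen : ∀ k, dd k - c k = 1/N := fun k => by
    show ((k:ℝ) + α + 1)/N - ((k:ℝ) + α)/N = 1/N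
    field_simp
    ring
  have hdd_le : ∀ k, dd k ≤ (k:ℝ) + β + 1 := fun k => by
    show ((k:ℝ) + α + 1)/N ≤ (k:ℝ) + β + 1
    have h1 : ((k:ℝ) + α + 1)/N ≤ ((k:ℝ) + α + 1) := by
      apply div_le_self ?_ hN1
      have := Nat.cast_nonneg (α := ℝ) k
      linarith
    linarith
  have ht_pos : ∀ k, ∀ t ∈ Set.Ioc (c k) (dd k), 0 < t := fun k t ht =>
    (hc0 k).trans_lt ht.1
  have habs : ∀ k, ∀ t ∈ Set.Ioc (c k) (dd k), |t - x| ≤ (k:ℝ) + γ := by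
    intro k t ht
    have h1 := ht_pos k t ht
    have h2 := ht.2.trans (hdd_le k)
    have h3 := Nat.cast_nonneg (α := ℝ) k
    rw [abs_le]
    constructor
    · have : x ≤ (k:ℝ) + γ := by linarith
      linarith
    · rw [hγdef]; linarith
  have hrpow : ∀ k, ∀ t ∈ Set.Ioc (c k) (dd k), |t - x| ^ r ≤ (k:ℝ) + γ := by
    intro k t ht
    calc |t - x| ^ r ≤ ((k:ℝ) + γ) ^ r :=
          Real.rpow_le_rpow (abs_nonneg _) (habs k t ht) hr0.le
      _ ≤ ((k:ℝ) + γ) ^ (1:ℝ) := Real.rpow_le_rpow_of_exponent_le (hkγ k) hr1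
      _ = (k:ℝ) + γ := Real.rpow_one _
  have hW0 : ∀ k, 0 ≤ W (m+1) a k x := fun k => W_nonneg ha hx.le k
  have hWsum : HasSum (fun k => W (m+1) a k x) 1 := W_hasSum (by omega) ha hx
  have Smom : Summable (fun k => W (m+1) a k x * ((k:ℝ)+γ)^2) :=
    summable_W_mul_sq m ha hx hγ0
  -- continuity facts
  have hIrC : Continuous (fun t : ℝ => |t - x| ^ r) := by
    apply Continuous.rpow_const ((continuous_id.sub continuous_const).abs)
    intro t; right; exact hr0.le
  have hsub : ∀ k, Set.uIcc (c k) (dd k) ⊆ Set.Ici (0:ℝ) := fun k => by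
    rw [Set.uIcc_of_le (hle k)]
    exact fun t ht => le_trans (hc0 k) ht.1
  have hIf : ∀ k, IntervalIntegrable f volume (c k) (dd k) := fun k =>
    (hf.mono (hsub k)).intervalIntegrable
  have hIabs : ∀ k, IntervalIntegrable (fun t => |f t - f x|) volume (c k) (dd k) := fun k =>
    (((hf.sub continuousOn_const).abs).mono (hsub k)).intervalIntegrable
  -- pointwise Lipschitz bound on Ioc
  have hlipk : ∀ k, ∀ t ∈ Set.Ioc (c k) (dd k), |f t - f x| ≤ C * |t - x| ^ r := by
    intro k t ht
    have ht0 : 0 < t := ht_pos k t ht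
    refine (hlip t x ht0 hx).trans ?_
    have hx2 : x ^ (r/2) ≤ (t + x) ^ (r/2) :=
      Real.rpow_le_rpow hx.le (by linarith) hθ0.le
    have hnum : 0 ≤ M * |t - x| ^ r := by positivity
    calc M * |t - x| ^ r / (t + x) ^ (r/2) ≤ M * |t - x| ^ r / x ^ (r/2) := by
          gcongr
      _ = C * |t - x| ^ r := by rw [hCdef]; ring
  -- nonnegativity of integrals
  have hJ2n : ∀ k, 0 ≤ J2 k := fun k =>
    intervalIntegral.integral_nonneg (hle k) fun t _ => sq_nonneg _
  have hJrn : ∀ k, 0 ≤ Jr k := fun k =>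
    intervalIntegral.integral_nonneg (hle k) fun t _ => Real.rpow_nonneg (abs_nonneg _) r
  -- length bound
  have hlen1 : ∀ k, |dd k - c k| ≤ 1 := fun k => by
    rw [abs_of_nonneg (sub_nonneg.mpr (hle k)), hlen k]
    exact (div_le_one hN0).mpr hN1
  -- integral size bounds
  have hJr_le : ∀ k, Jr k ≤ (k:ℝ) + γ := by
    intro k
    have h := intervalIntegral.norm_integral_le_of_norm_le_const
      (C := (k:ℝ) + γ) (f := fun t => |t - x| ^ r) (a := c k) (b := dd k) ?_
    · have h2 : Jr k ≤ ‖Jr k‖ := le_abs_self _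
      have h3 : ((k:ℝ) + γ) * |dd k - c k| ≤ ((k:ℝ) + γ) * 1 :=
        mul_le_mul_of_nonneg_left (hlen1 k) (by linarith [hkγ k])
      calc Jr k ≤ ‖Jr k‖ := h2
        _ ≤ ((k:ℝ) + γ) * |dd k - c k| := h
        _ ≤ (k:ℝ) + γ := by linarith
    · intro t ht
      rw [Set.uIoc_of_le (hle k)] at ht
      rw [Real.norm_of_nonneg (Real.rpow_nonneg (abs_nonneg _) r)]
      exact hrpow k t ht
  have hJ2_le : ∀ k, J2 k ≤ ((k:ℝ) + γ)^2 := by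
    intro k
    have h := intervalIntegral.norm_integral_le_of_norm_le_const
      (C := ((k:ℝ) + γ)^2) (f := fun t => (t - x)^2) (a := c k) (b := dd k) ?_
    · have h3 : ((k:ℝ) + γ)^2 * |dd k - c k| ≤ ((k:ℝ) + γ)^2 * 1 :=
        mul_le_mul_of_nonneg_left (hlen1 k) (by positivity)
      calc J2 k ≤ ‖J2 k‖ := le_abs_self _
        _ ≤ ((k:ℝ) + γ)^2 * |dd k - c k| := h
        _ ≤ ((k:ℝ) + γ)^2 := by linarith
    · intro t ht
      rw [Set.uIoc_of_le (hle k)] at ht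
      rw [Real.norm_of_nonneg (sq_nonneg _)]
      calc (t - x)^2 = |t - x|^2 := (sq_abs _).symm
        _ ≤ ((k:ℝ) + γ)^2 := by
            have := habs k t ht
            have := abs_nonneg (t - x)
            nlinarith
  have hfx0 : (0:ℝ) ≤ |f x| := abs_nonneg _
  have hJf_le : ∀ k, |Jf k| ≤ (|f x| + C) * ((k:ℝ) + γ)^2 := by
    intro k
    have h := intervalIntegral.norm_integral_le_of_norm_le_const
      (C := (|f x| + C) * ((k:ℝ) + γ)) (f := f) (a := c k) (b := dd k) ?_
    · have hk1 := hkγ k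
      have h3 : (|f x| + C) * ((k:ℝ) + γ) * |dd k - c k| ≤ (|f x| + C) * ((k:ℝ) + γ) * 1 :=
        mul_le_mul_of_nonneg_left (hlen1 k) (by nlinarith)
      calc |Jf k| ≤ (|f x| + C) * ((k:ℝ) + γ) * |dd k - c k| := h
        _ ≤ (|f x| + C) * ((k:ℝ) + γ) * 1 := h3
        _ = (|f x| + C) * ((k:ℝ) + γ) := mul_one _
        _ ≤ (|f x| + C) * ((k:ℝ) + γ)^2 := by
            have hA : 0 ≤ |f x| + C := add_nonneg hfx0 hC0
            have h5 : (0:ℝ) ≤ ((k:ℝ)+γ) := le_trans zero_le_one hk1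
            nlinarith [mul_nonneg (mul_nonneg hA (sub_nonneg.mpr hk1)) h5]
    · intro t ht
      rw [Set.uIoc_of_le (hle k)] at ht
      have h1 : |f t - f x| ≤ C * ((k:ℝ) + γ) := by
        refine (hlipk k t ht).trans ?_
        exact mul_le_mul_of_nonneg_left (hrpow k t ht) hC0
      have h2 : |f t| ≤ |f x| + |f t - f x| := by
        calc |f t| = |f x + (f t - f x)| := by ring_nf
          _ ≤ |f x| + |f t - f x| := abs_add_le _ _
      have hk1 := hkγ k
      have h6 : 0 ≤ |f x| * ((k:ℝ) + γ - 1) := mul_nonneg hfx0 (by linarith)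
      rw [Real.norm_eq_abs]
      nlinarith [h1, h2, h6]
  -- summabilities
  have SJ2 : Summable (fun k => W (m+1) a k x * J2 k) :=
    Summable.of_nonneg_of_le (fun k => mul_nonneg (hW0 k) (hJ2n k))
      (fun k => mul_le_mul_of_nonneg_left (hJ2_le k) (hW0 k)) Smom
  have SJr : Summable (fun k => W (m+1) a k x * Jr k) := by
    refine Summable.of_nonneg_of_le (fun k => mul_nonneg (hW0 k) (hJrn k))
      (fun k => ?_) Smom
    have hk1 := hkγ k
    have h1 : Jr k ≤ ((k:ℝ) + γ)^2 := by nlinarith [hJr_le k]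
    exact mul_le_mul_of_nonneg_left h1 (hW0 k)
  have SJf : Summable (fun k => W (m+1) a k x * Jf k) := by
    refine Summable.of_norm ?_
    refine Summable.of_nonneg_of_le (fun k => norm_nonneg _) (fun k => ?_)
      (Smom.mul_left (|f x| + C))
    calc ‖W (m+1) a k x * Jf k‖ = W (m+1) a k x * |Jf k| := by
          rw [norm_mul, Real.norm_of_nonneg (hW0 k), Real.norm_eq_abs]
      _ ≤ W (m+1) a k x * ((|f x| + C) * ((k:ℝ) + γ)^2) :=
          mul_le_mul_of_nonneg_left (hJf_le k) (hW0 k)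
      _ = (|f x| + C) * (W (m+1) a k x * ((k:ℝ) + γ)^2) := by ring
  -- B1
  have B1 : ∀ k, |Jf k - f x / N| ≤ C * Jr k := by
    intro k
    have e : (∫ t in c k..dd k, (f t - f x)) = Jf k - f x / N := by
      rw [intervalIntegral.integral_sub (hIf k) intervalIntegrable_const,
        intervalIntegral.integral_const, hlen k, smul_eq_mul]
      show Jf k - 1/N * f x = Jf k - f x / N
      ring
    have mono : (∫ t in c k..dd k, |f t - f x|) ≤ ∫ t in c k..dd k, C * |t - x| ^ r := by
      rw [intervalIntegral.integral_of_le (hle k), intervalIntegral.integral_of_le (hle k)]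
      refine setIntegral_mono_on ?_ ?_ measurableSet_Ioc ?_
      · exact (intervalIntegrable_iff_integrableOn_Ioc_of_le (hle k)).mp (hIabs k)
      · exact (intervalIntegrable_iff_integrableOn_Ioc_of_le (hle k)).mp
          ((continuous_const.mul hIrC).intervalIntegrable _ _)
      · exact fun t ht => hlipk k t ht
    calc |Jf k - f x / N| = |∫ t in c k..dd k, (f t - f x)| := by rw [e]
      _ ≤ ∫ t in c k..dd k, |f t - f x| :=
          intervalIntegral.abs_integral_le_integral_abs (hle k)
      _ ≤ ∫ t in c k..dd k, C * |t - x| ^ r := mono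
      _ = C * Jr k := intervalIntegral.integral_const_mul _ _
  -- B2
  have B2 : ∀ k, Jr k ≤ (J2 k) ^ (r/2) * (1/N) ^ (1 - r/2) := by
    intro k
    have h := integral_abs_rpow_le (hle k) hr0 hr2 (x := x)
    rw [hlen k] at h
    exact h
  -- conclude
  have main := tsum_chain (fun k => W (m+1) a k x) Jf J2 Jr N (f x) (r/2) C
    hW0 hWsum hN0 hJ2n hJrn hC0 B1 B2 hθ0 hθ1 SJf SJ2 SJr
  have hTf : TKS (m+1) a α β f x = N * ∑' k, W (m+1) a k x * Jf k := rfl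
  have hT2 : TKS (m+1) a α β (fun t => (t - x)^2) x = N * ∑' k, W (m+1) a k x * J2 k := rfl
  rw [hTf, hT2]
  have hnum0 : 0 ≤ N * ∑' k, W (m+1) a k x * J2 k :=
    mul_nonneg hN0.le (tsum_nonneg fun k => mul_nonneg (hW0 k) (hJ2n k))
  have hRHS : M * ((N * ∑' k, W (m+1) a k x * J2 k) / x) ^ (r/2)
      = C * (N * ∑' k, W (m+1) a k x * J2 k) ^ (r/2) := by
    rw [Real.div_rpow hnum0 hx.le, hCdef]
    ring
  rw [hRHS]
  exact main
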